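/- For sorted costs c_1 ≥ … ≥ c_n > 0 and k ≤ n/2, let V_k = c([2k])/2 be the value of Γ([n]^(k), 2^[n]). Then the value of Γ(2^[n], [n]^(k)) (Searcher restricted to k-subsets, Hider unrestricted) equals c([n]) − V_k, and this satisfies (c([n]) − V_k) − V_k = c([n]) − c([2k]) ≥ 0. -/

import Mathlib

open Finset

/-- Weighted symmetric-difference payoff `c(H Δ S)` (0-indexed locations). -/
def payoff (c : ℕ → ℝ) (H S : Finset ℕ) : ℝ := ∑ j ∈ (H \ S) ∪ (S \ H), c j

def Ev (k : ℕ) : Finset ℕ := (Finset.range k).image (fun i => 2*i)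
def Od (k : ℕ) : Finset ℕ := (Finset.range k).image (fun i => 2*i+1)

lemma mem_Ev {k j : ℕ} : j ∈ Ev k ↔ j % 2 = 0 ∧ j < 2*k := by
  simp only [Ev, Finset.mem_image, Finset.mem_range]
  constructor
  · rintro ⟨i, hi, rfl⟩; omega
  · rintro ⟨h1, h2⟩; exact ⟨j/2, by omega, by omega⟩

lemma mem_Od {k j : ℕ} : j ∈ Od k ↔ j % 2 = 1 ∧ j < 2*k := by
  simp only [Od, Finset.mem_image, Finset.mem_range]
  constructor
  · rintro ⟨i, hi, rfl⟩; omega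
  · rintro ⟨h1, h2⟩; exact ⟨j/2, by omega, by omega⟩

lemma card_Ev (k : ℕ) : (Ev k).card = k := by
  rw [Ev, Finset.card_image_of_injective _ (fun a b h => by omega), Finset.card_range]

lemma card_Od (k : ℕ) : (Od k).card = k := by
  rw [Od, Finset.card_image_of_injective _ (fun a b h => by omega), Finset.card_range]

lemma Ev_subset {k n : ℕ} (h : 2*k ≤ n) : Ev k ⊆ Finset.range n := by
  intro j hj; rw [mem_Ev] at hj; exact Finset.mem_range.2 (by omega)

lemma Od_subset {k n : ℕ} (h : 2*k ≤ n) : Od k ⊆ Finset.range n := by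
  intro j hj; rw [mem_Od] at hj; exact Finset.mem_range.2 (by omega)
lemma payoff_eq {c : ℕ → ℝ} {n : ℕ} {H S : Finset ℕ} (hH : H ⊆ Finset.range n)
    (hS : S ⊆ Finset.range n) :
    payoff c H S = ∑ j ∈ Finset.range n, if (j ∈ H ↔ j ∈ S) then 0 else c j := by
  have hset : (H \ S) ∪ (S \ H) = (Finset.range n).filter (fun j => ¬ (j ∈ H ↔ j ∈ S)) := by
    ext j
    simp only [Finset.mem_union, Finset.mem_sdiff, Finset.mem_filter]
    constructor
    · rintro (⟨h1, h2⟩ | ⟨h1, h2⟩)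
      · exact ⟨hH h1, by tauto⟩
      · exact ⟨hS h1, by tauto⟩
    · rintro ⟨-, h⟩
      by_cases h1 : j ∈ H <;> by_cases h2 : j ∈ S <;> tauto
  rw [payoff, hset, Finset.sum_filter]
  refine Finset.sum_congr rfl fun j _ => ?_
  by_cases h : (j ∈ H ↔ j ∈ S) <;> simp [h]

lemma value_eq_sum {n k : ℕ} {c : ℕ → ℝ} (hkn : 2*k ≤ n) :
    (∑ i ∈ Finset.range n, c i) - (∑ i ∈ Finset.range (2*k), c i)/2
      = ∑ j ∈ Finset.range n, (if j < 2*k then c j / 2 else c j) := by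
  have h1 : ∑ j ∈ Finset.range (2*k), (if j < 2*k then c j / 2 else 0)
      = ∑ j ∈ Finset.range n, (if j < 2*k then c j / 2 else 0) :=
    Finset.sum_subset (Finset.range_subset_range.2 hkn) (fun x _ hx => by
      simp only [Finset.mem_range, not_lt] at hx
      rw [if_neg (by omega)])
  have h2 : ∑ j ∈ Finset.range (2*k), (if j < 2*k then c j / 2 else 0)
      = (∑ i ∈ Finset.range (2*k), c i)/2 := by
    rw [Finset.sum_div]
    exact Finset.sum_congr rfl fun j hj => if_pos (Finset.mem_range.1 hj)
  have h3 : ∀ j ∈ Finset.range n,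
      (if j < 2*k then c j / 2 else c j) = c j - (if j < 2*k then c j / 2 else 0) := by
    intro j _
    by_cases h : j < 2*k <;> simp [h] <;> ring
  rw [Finset.sum_congr rfl h3, Finset.sum_sub_distrib, ← h1, h2]

lemma searcher_bound {n k : ℕ} {c : ℕ → ℝ}
    (hpos : ∀ i < n, 0 < c i) (hkn : 2*k ≤ n)
    {H : Finset ℕ} (hH : H ⊆ Finset.range n) :
    (1/2) * payoff c H (Ev k) + (1/2) * payoff c H (Od k)
      ≤ (∑ i ∈ Finset.range n, c i) - (∑ i ∈ Finset.range (2*k), c i)/2 := by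
  rw [payoff_eq hH (Ev_subset hkn), payoff_eq hH (Od_subset hkn), value_eq_sum hkn,
    Finset.mul_sum, Finset.mul_sum, ← Finset.sum_add_distrib]
  refine Finset.sum_le_sum fun j hj => ?_
  have hjn : j < n := Finset.mem_range.1 hj
  by_cases hj2 : j < 2*k
  · have h1 : (j ∈ Ev k) ↔ (j % 2 = 0) := by rw [mem_Ev]; exact and_iff_left hj2
    have h2 : (j ∈ Od k) ↔ ¬ (j % 2 = 0) := by rw [mem_Od]; omega
    by_cases hH' : j ∈ H <;> by_cases hpar : j % 2 = 0 <;>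
      simp [h1, h2, hH', hpar, hj2] <;> ring_nf <;> linarith [hpos j hjn]
  · have h1 : j ∉ Ev k := by rw [mem_Ev]; omega
    have h2 : j ∉ Od k := by rw [mem_Od]; omega
    by_cases hH' : j ∈ H <;> simp [h1, h2, hH', hj2] <;> linarith [hpos j hjn]
noncomputable def tv (n k : ℕ) (c : ℕ → ℝ) : ℝ := if 2*k < n then c (2*k) else 0
noncomputable def sfun (n k : ℕ) (c : ℕ → ℝ) (m : ℕ) : ℝ :=
  if m < 2*k then (1 + tv n k c / c m)/2 else 1
noncomputable def gfun (n k : ℕ) (c : ℕ → ℝ) (m : ℕ) : ℝ :=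
  if m = 0 then 0 else sfun n k c (m-1)
noncomputable def wt (n k : ℕ) (c : ℕ → ℝ) (m : ℕ) : ℝ :=
  gfun n k c (m+1) - gfun n k c m

section facts
variable {n k : ℕ} {c : ℕ → ℝ}
variable (hpos : ∀ i < n, 0 < c i) (hsort : ∀ i j, i ≤ j → j < n → c j ≤ c i) (hkn : 2*k ≤ n)

include hpos in
lemma tv_nonneg : 0 ≤ tv n k c := by
  unfold tv; split
  · exact le_of_lt (hpos _ (by assumption))
  · exact le_refl 0

include hpos hsort hkn in
lemma tv_le {m : ℕ} (hm : m < 2*k) : tv n k c ≤ c m := by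
  unfold tv; split
  · exact hsort m (2*k) (by omega) (by assumption)
  · exact le_of_lt (hpos m (by omega))

include hpos hsort hkn in
lemma sfun_le_one (m : ℕ) : sfun n k c m ≤ 1 := by
  unfold sfun; split
  · rename_i h
    have hc : 0 < c m := hpos m (by omega)
    have : tv n k c / c m ≤ 1 := (div_le_one hc).2 (tv_le hpos hsort hkn h)
    linarith
  · exact le_refl 1

include hpos hkn in
lemma sfun_nonneg (m : ℕ) : 0 ≤ sfun n k c m := by
  unfold sfun; split
  · rename_i h
    have hc : 0 < c m := hpos m (by omega)
    have : 0 ≤ tv n k c / c m := div_nonneg (tv_nonneg hpos) (le_of_lt hc)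
    linarith
  · exact zero_le_one

include hpos hsort hkn in
lemma sfun_mono {a b : ℕ} (hab : a ≤ b) : sfun n k c a ≤ sfun n k c b := by
  by_cases hb : b < 2*k
  · have ha : a < 2*k := by omega
    rw [sfun, sfun, if_pos ha, if_pos hb]
    have hca : 0 < c a := hpos a (by omega)
    have hcb : 0 < c b := hpos b (by omega)
    have : tv n k c / c a ≤ tv n k c / c b :=
      div_le_div_of_nonneg_left (tv_nonneg hpos) hcb (hsort a b hab (by omega))
    linarith
  · have h2 : sfun n k c b = 1 := by simp [sfun, hb]
    rw [h2]; exact sfun_le_one hpos hsort hkn a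

set_option linter.unusedSectionVars false in
lemma gfun_succ' (m : ℕ) : gfun n k c (m+1) = sfun n k c m := by simp [gfun]

include hpos hsort hkn in
lemma wt_nonneg (m : ℕ) : 0 ≤ wt n k c m := by
  unfold wt
  rw [gfun_succ']
  rcases Nat.eq_zero_or_pos m with hm | hm
  · subst hm; simp [gfun]; exact sfun_nonneg hpos hkn 0
  · rw [gfun, if_neg (by omega)]
    linarith [sfun_mono hpos hsort hkn (Nat.sub_le m 1)]

end facts
lemma sum_wt {n k : ℕ} {c : ℕ → ℝ} (N : ℕ) :
    ∑ m ∈ Finset.range N, wt n k c m = gfun n k c N := by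
  rw [show ∑ m ∈ Finset.range N, wt n k c m
      = ∑ m ∈ Finset.range N, (gfun n k c (m+1) - gfun n k c m) from rfl,
    Finset.sum_range_sub]
  simp [gfun]

lemma partial_wt {n k : ℕ} {c : ℕ → ℝ} (j : ℕ) :
    ∑ m ∈ Finset.range (2*k+1), (if m ≤ j then wt n k c m else 0) = sfun n k c j := by
  rcases le_or_gt (2*k) j with hj | hj
  · have h1 : ∑ m ∈ Finset.range (2*k+1), (if m ≤ j then wt n k c m else 0)
        = ∑ m ∈ Finset.range (2*k+1), wt n k c m := by
      refine Finset.sum_congr rfl fun m hm => ?_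
      rw [if_pos (by have := Finset.mem_range.1 hm; omega)]
    rw [h1, sum_wt, gfun, if_neg (Nat.succ_ne_zero _)]
    simp only [Nat.add_sub_cancel]
    rw [sfun, sfun, if_neg (by omega), if_neg (by omega)]
  · have hsub : Finset.range (j+1) ⊆ Finset.range (2*k+1) := Finset.range_subset_range.2 (by omega)
    have h1 : ∑ m ∈ Finset.range (j+1), (if m ≤ j then wt n k c m else 0)
        = ∑ m ∈ Finset.range (2*k+1), (if m ≤ j then wt n k c m else 0) := by
      refine Finset.sum_subset hsub fun m _ hm => ?_
      rw [if_neg (by simp at hm; omega)]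
    rw [← h1]
    have h2 : ∑ m ∈ Finset.range (j+1), (if m ≤ j then wt n k c m else 0)
        = ∑ m ∈ Finset.range (j+1), wt n k c m := by
      refine Finset.sum_congr rfl fun m hm => ?_
      rw [if_pos (by have := Finset.mem_range.1 hm; omega)]
    rw [h2, sum_wt]
    simp [gfun]

lemma sum_wt_all {n k : ℕ} {c : ℕ → ℝ} :
    ∑ m ∈ Finset.range (2*k+1), wt n k c m = 1 := by
  rw [sum_wt, gfun, if_neg (Nat.succ_ne_zero _)]
  simp [sfun]

lemma hider_inner {n k : ℕ} {c : ℕ → ℝ} {S : Finset ℕ} {j : ℕ} :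
    ∑ m ∈ Finset.range (2*k+1), wt n k c m * (if ((m ≤ j) ↔ j ∈ S) then 0 else c j)
      = (if j ∈ S then 1 - sfun n k c j else sfun n k c j) * c j := by
  by_cases hjS : j ∈ S
  · have h1 : ∀ m ∈ Finset.range (2*k+1),
        wt n k c m * (if ((m ≤ j) ↔ j ∈ S) then 0 else c j)
          = wt n k c m * c j - (if m ≤ j then wt n k c m else 0) * c j := by
      intro m _
      by_cases hm : m ≤ j <;> simp [hm, hjS] <;> ring
    rw [Finset.sum_congr rfl h1, Finset.sum_sub_distrib, ← Finset.sum_mul, ← Finset.sum_mul,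
      sum_wt_all, partial_wt, if_pos hjS]
    ring
  · have h1 : ∀ m ∈ Finset.range (2*k+1),
        wt n k c m * (if ((m ≤ j) ↔ j ∈ S) then 0 else c j)
          = (if m ≤ j then wt n k c m else 0) * c j := by
      intro m _
      by_cases hm : m ≤ j <;> simp [hm, hjS]
    rw [Finset.sum_congr rfl h1, ← Finset.sum_mul, partial_wt, if_neg hjS]

lemma hider_bound {n k : ℕ} {c : ℕ → ℝ}
    (hpos : ∀ i < n, 0 < c i) (hsort : ∀ i j, i ≤ j → j < n → c j ≤ c i)
    (hkn : 2*k ≤ n) {S : Finset ℕ} (hS : S ⊆ Finset.range n) (hcard : S.card = k) :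
    (∑ i ∈ Finset.range n, c i) - (∑ i ∈ Finset.range (2*k), c i)/2
      ≤ ∑ m ∈ Finset.range (2*k+1), wt n k c m * payoff c (Finset.range n \ Finset.range m) S := by
  -- rewrite the RHS as a sum over j
  have hstep : ∀ m, payoff c (Finset.range n \ Finset.range m) S
      = ∑ j ∈ Finset.range n, (if ((m ≤ j) ↔ j ∈ S) then 0 else c j) := by
    intro m
    rw [payoff_eq Finset.sdiff_subset hS]
    refine Finset.sum_congr rfl fun j hj => ?_
    have hjn : j < n := Finset.mem_range.1 hj
    have hmem : (j ∈ Finset.range n \ Finset.range m) ↔ (m ≤ j) := by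
      simp only [Finset.mem_sdiff, Finset.mem_range]
      omega
    exact if_congr (iff_congr hmem Iff.rfl) rfl rfl
  have hswap : ∑ m ∈ Finset.range (2*k+1), wt n k c m * payoff c (Finset.range n \ Finset.range m) S
      = ∑ j ∈ Finset.range n, (if j ∈ S then 1 - sfun n k c j else sfun n k c j) * c j := by
    calc ∑ m ∈ Finset.range (2*k+1), wt n k c m * payoff c (Finset.range n \ Finset.range m) S
        = ∑ m ∈ Finset.range (2*k+1), ∑ j ∈ Finset.range n,
            wt n k c m * (if ((m ≤ j) ↔ j ∈ S) then 0 else c j) := by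
          refine Finset.sum_congr rfl fun m _ => ?_
          rw [hstep m, Finset.mul_sum]
      _ = ∑ j ∈ Finset.range n, ∑ m ∈ Finset.range (2*k+1),
            wt n k c m * (if ((m ≤ j) ↔ j ∈ S) then 0 else c j) := Finset.sum_comm
      _ = _ := Finset.sum_congr rfl fun j _ => hider_inner
  rw [hswap, value_eq_sum hkn]
  -- difference is a simple sum
  have hdiff : ∀ j ∈ Finset.range n,
      (if j ∈ S then 1 - sfun n k c j else sfun n k c j) * c j
        - (if j < 2*k then c j / 2 else c j)
      = (if j < 2*k then (tv n k c)/2 - (if j ∈ S then tv n k c else 0)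
         else - (if j ∈ S then c j else 0)) := by
    intro j hj
    have hjn : j < n := Finset.mem_range.1 hj
    have hc : c j ≠ 0 := ne_of_gt (hpos j hjn)
    by_cases hj2 : j < 2*k <;> by_cases hjS : j ∈ S <;>
      simp [sfun, hj2, hjS] <;> field_simp <;> ring
  have key : 0 ≤ ∑ j ∈ Finset.range n,
      ((if j ∈ S then 1 - sfun n k c j else sfun n k c j) * c j
        - (if j < 2*k then c j / 2 else c j)) := by
    rw [Finset.sum_congr rfl hdiff, Finset.range_eq_Ico,
      ← Finset.sum_Ico_consecutive _ (Nat.zero_le (2*k)) hkn, ← Finset.range_eq_Ico]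
    have h1 : ∑ j ∈ Finset.range (2*k),
        (if j < 2*k then (tv n k c)/2 - (if j ∈ S then tv n k c else 0)
         else - (if j ∈ S then c j else 0))
        = (2*k : ℝ) * (tv n k c/2) - ((Finset.range (2*k) ∩ S).card : ℝ) * tv n k c := by
      rw [Finset.sum_congr rfl (fun j hj => if_pos (Finset.mem_range.1 hj)),
        Finset.sum_sub_distrib, Finset.sum_const, Finset.sum_ite_mem, Finset.sum_const,
        Finset.card_range]
      simp [nsmul_eq_mul]
    have h2 : ∑ j ∈ Finset.Ico (2*k) n,
        (if j < 2*k then (tv n k c)/2 - (if j ∈ S then tv n k c else 0)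
         else - (if j ∈ S then c j else 0))
        = - ∑ j ∈ Finset.Ico (2*k) n ∩ S, c j := by
      calc ∑ j ∈ Finset.Ico (2*k) n,
            (if j < 2*k then (tv n k c)/2 - (if j ∈ S then tv n k c else 0)
             else - (if j ∈ S then c j else 0))
          = ∑ j ∈ Finset.Ico (2*k) n, (if j ∈ S then -(c j) else 0) := by
            refine Finset.sum_congr rfl fun j hj => ?_
            rw [if_neg (by have := Finset.mem_Ico.1 hj; omega)]
            by_cases h : j ∈ S <;> simp [h]
        _ = ∑ j ∈ Finset.Ico (2*k) n ∩ S, -(c j) := Finset.sum_ite_mem _ _ _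
        _ = - ∑ j ∈ Finset.Ico (2*k) n ∩ S, c j := by rw [Finset.sum_neg_distrib]
    rw [h1, h2]
    have hbound : ∑ j ∈ Finset.Ico (2*k) n ∩ S, c j
        ≤ ((Finset.Ico (2*k) n ∩ S).card : ℝ) * tv n k c := by
      have := Finset.sum_le_card_nsmul (Finset.Ico (2*k) n ∩ S) c (tv n k c) (fun j hj => by
        have hj' := Finset.mem_Ico.1 (Finset.mem_inter.1 hj).1
        rw [tv, if_pos (by omega)]
        exact hsort (2*k) j (by omega) (by omega))
      simpa [nsmul_eq_mul] using this
    have hunion : (Finset.range (2*k) ∩ S) ∪ (Finset.Ico (2*k) n ∩ S) = S := by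
      ext j
      simp only [Finset.mem_union, Finset.mem_inter, Finset.mem_range, Finset.mem_Ico]
      constructor
      · rintro (⟨-, h⟩ | ⟨-, h⟩) <;> exact h
      · intro hj
        have hjn : j < n := Finset.mem_range.1 (hS hj)
        by_cases h : j < 2*k
        · exact Or.inl ⟨h, hj⟩
        · exact Or.inr ⟨⟨by omega, hjn⟩, hj⟩
    have hdisj : Disjoint (Finset.range (2*k) ∩ S) (Finset.Ico (2*k) n ∩ S) := by
      rw [Finset.disjoint_left]
      intro j hj1 hj2
      have := Finset.mem_range.1 (Finset.mem_inter.1 hj1).1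
      have := (Finset.mem_Ico.1 (Finset.mem_inter.1 hj2).1).1
      omega
    have hab : (Finset.range (2*k) ∩ S).card + (Finset.Ico (2*k) n ∩ S).card = k := by
      rw [← Finset.card_union_of_disjoint hdisj, hunion, hcard]
    have habR : ((Finset.range (2*k) ∩ S).card : ℝ) + ((Finset.Ico (2*k) n ∩ S).card : ℝ)
        = (k : ℝ) := by exact_mod_cast congrArg (Nat.cast : ℕ → ℝ) hab
    have ht0 : 0 ≤ tv n k c := tv_nonneg hpos
    push_cast
    push_cast at habR
    nlinarith [hbound, habR, ht0]
  have := Finset.sum_sub_distrib (s := Finset.range n)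
    (f := fun j => (if j ∈ S then 1 - sfun n k c j else sfun n k c j) * c j)
    (g := fun j => (if j < 2*k then c j / 2 else c j))
  linarith [key, this.symm.le]

theorem stmt_16 (n k : ℕ) (c : ℕ → ℝ)
    (hpos : ∀ i < n, 0 < c i)
    (hsort : ∀ i j, i ≤ j → j < n → c j ≤ c i)
    (hk : 1 ≤ k) (hkn : 2*k ≤ n) :
    let total : ℝ := ∑ i ∈ Finset.range n, c i
    let Vk : ℝ := (∑ i ∈ Finset.range (2*k), c i) / 2
    -- the game Γ(2^[n],[n]^(k)) has value total - Vk: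
    -- a Hider mixed strategy (over all subsets of [n]) guaranteeing ≥ total - Vk
    (∃ w : Finset ℕ → ℝ, (∀ A, 0 ≤ w A) ∧
      (∑ A ∈ (Finset.range n).powerset, w A) = 1 ∧
      ∀ S ⊆ Finset.range n, S.card = k →
        total - Vk ≤ ∑ A ∈ (Finset.range n).powerset, w A * payoff c A S) ∧
    -- a Searcher mixed strategy over k-subsets guaranteeing ≤ total - Vk
    (∃ u : Finset ℕ → ℝ, (∀ A, 0 ≤ u A) ∧
      (∑ S ∈ (Finset.range n).powerset.filter (fun S => S.card = k), u S) = 1 ∧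
      ∀ H ⊆ Finset.range n,
        ∑ S ∈ (Finset.range n).powerset.filter (fun S => S.card = k),
            u S * payoff c H S ≤ total - Vk) ∧
    -- and this value exceeds Vk by c([n]) - c([2k]) ≥ 0
    ((total - Vk) - Vk = total - ∑ i ∈ Finset.range (2*k), c i) ∧
    (0 ≤ total - ∑ i ∈ Finset.range (2*k), c i) := by
  intro total Vk
  have hIco : ∑ i ∈ Finset.range (2*k), c i + ∑ i ∈ Finset.Ico (2*k) n, c i
      = ∑ i ∈ Finset.range n, c i := by
    simp only [Finset.range_eq_Ico]
    exact Finset.sum_Ico_consecutive _ (Nat.zero_le _) hkn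
  refine ⟨?_, ?_, ?_, ?_⟩
  · -- Hider strategy
    refine ⟨fun A => ∑ m ∈ Finset.range (2*k+1),
        (if A = Finset.range n \ Finset.range m then wt n k c m else 0), ?_, ?_, ?_⟩
    · intro A
      refine Finset.sum_nonneg fun m _ => ?_
      split
      · exact wt_nonneg hpos hsort hkn m
      · exact le_refl 0
    · rw [Finset.sum_comm]
      have h1 : ∀ m ∈ Finset.range (2*k+1),
          (∑ A ∈ (Finset.range n).powerset,
            (if A = Finset.range n \ Finset.range m then wt n k c m else 0)) = wt n k c m := by
        intro m _
        rw [Finset.sum_ite_eq' _ _ (fun _ => wt n k c m),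
          if_pos (Finset.mem_powerset.2 Finset.sdiff_subset)]
      rw [Finset.sum_congr rfl h1, sum_wt_all]
    · intro S hS hcard
      have hE : ∑ A ∈ (Finset.range n).powerset,
          (∑ m ∈ Finset.range (2*k+1),
            (if A = Finset.range n \ Finset.range m then wt n k c m else 0)) * payoff c A S
          = ∑ m ∈ Finset.range (2*k+1),
              wt n k c m * payoff c (Finset.range n \ Finset.range m) S := by
        calc ∑ A ∈ (Finset.range n).powerset,
            (∑ m ∈ Finset.range (2*k+1),
              (if A = Finset.range n \ Finset.range m then wt n k c m else 0)) * payoff c A S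
            = ∑ A ∈ (Finset.range n).powerset, ∑ m ∈ Finset.range (2*k+1),
              (if A = Finset.range n \ Finset.range m then wt n k c m * payoff c A S else 0) := by
              refine Finset.sum_congr rfl fun A _ => ?_
              rw [Finset.sum_mul]
              refine Finset.sum_congr rfl fun m _ => ?_
              split <;> simp
          _ = ∑ m ∈ Finset.range (2*k+1), ∑ A ∈ (Finset.range n).powerset,
              (if A = Finset.range n \ Finset.range m then wt n k c m * payoff c A S else 0) :=
              Finset.sum_comm
          _ = ∑ m ∈ Finset.range (2*k+1),
              wt n k c m * payoff c (Finset.range n \ Finset.range m) S := by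
              refine Finset.sum_congr rfl fun m _ => ?_
              rw [Finset.sum_ite_eq' _ _ (fun A => wt n k c m * payoff c A S),
                if_pos (Finset.mem_powerset.2 Finset.sdiff_subset)]
      rw [hE]
      exact hider_bound hpos hsort hkn hS hcard
  · -- Searcher strategy
    refine ⟨fun A => (if A = Ev k then (1/2 : ℝ) else 0) + (if A = Od k then (1/2 : ℝ) else 0),
      ?_, ?_, ?_⟩
    · intro A
      have : (0:ℝ) ≤ (if A = Ev k then (1/2 : ℝ) else 0) := by split <;> norm_num
      have : (0:ℝ) ≤ (if A = Od k then (1/2 : ℝ) else 0) := by split <;> norm_num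
      linarith
    · rw [Finset.sum_add_distrib,
        Finset.sum_ite_eq' _ _ (fun _ => (1/2 : ℝ)),
        Finset.sum_ite_eq' _ _ (fun _ => (1/2 : ℝ)),
        if_pos (Finset.mem_filter.2 ⟨Finset.mem_powerset.2 (Ev_subset hkn), card_Ev k⟩),
        if_pos (Finset.mem_filter.2 ⟨Finset.mem_powerset.2 (Od_subset hkn), card_Od k⟩)]
      norm_num
    · intro H hH
      have hE : ∑ S ∈ (Finset.range n).powerset.filter (fun S => S.card = k),
          ((if S = Ev k then (1/2 : ℝ) else 0) + (if S = Od k then (1/2 : ℝ) else 0))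
            * payoff c H S
          = (1/2) * payoff c H (Ev k) + (1/2) * payoff c H (Od k) := by
        have h1 : ∀ S, ((if S = Ev k then (1/2 : ℝ) else 0) + (if S = Od k then (1/2 : ℝ) else 0))
            * payoff c H S
            = (if S = Ev k then (1/2 : ℝ) * payoff c H S else 0)
              + (if S = Od k then (1/2 : ℝ) * payoff c H S else 0) := by
          intro S
          rw [add_mul]
          congr 1 <;> (split <;> simp)
        rw [Finset.sum_congr rfl (fun S _ => h1 S), Finset.sum_add_distrib,
          Finset.sum_ite_eq' _ _ (fun S => (1/2 : ℝ) * payoff c H S),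
          Finset.sum_ite_eq' _ _ (fun S => (1/2 : ℝ) * payoff c H S),
          if_pos (Finset.mem_filter.2 ⟨Finset.mem_powerset.2 (Ev_subset hkn), card_Ev k⟩),
          if_pos (Finset.mem_filter.2 ⟨Finset.mem_powerset.2 (Od_subset hkn), card_Od k⟩)]
      rw [hE]
      exact searcher_bound hpos hkn hH
  · show (total - Vk) - Vk = total - ∑ i ∈ Finset.range (2*k), c i
    simp only [Vk]
    ring
  · have h0 : 0 ≤ ∑ i ∈ Finset.Ico (2*k) n, c i :=
      Finset.sum_nonneg fun i hi => (hpos i (Finset.mem_Ico.1 hi).2).le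
    show 0 ≤ total - ∑ i ∈ Finset.range (2*k), c i
    simp only [total]
    linarith
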